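/- For H ∈ (0,1), θ > 0, σ ∈ ℝ and t ≥ 0, the variance of the fractional Ornstein–Uhlenbeck process started at a deterministic point, given by Var_H(t) = (σ²/2) ( ∫₀ᵗ 2H e^{−z/θ} z^{2H−1} dz + e^{−2t/θ} ∫₀ᵗ 2H e^{z/θ} z^{2H−1} dz ), satisfies lim_{t → +∞} Var_H(t) = σ² θ^{2H} H Γ(2H). -/

import Mathlib

open MeasureTheory Real Filter

/-- The variance function of the fOU process with deterministic initial value. -/
noncomputable def VarH (θ σ H t : ℝ) : ℝ :=
  (σ^2 / 2) *
    ((∫ z in (0:ℝ)..t, 2*H * Real.exp (-z/θ) * z ^ (2*H-1))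
      + Real.exp (-2*t/θ) * (∫ z in (0:ℝ)..t, 2*H * Real.exp (z/θ) * z ^ (2*H-1)))

/-- `Var_H(t) → σ² θ^{2H} H Γ(2H)` as `t → +∞`. -/
theorem VarH_tendsto_atTop (θ σ H : ℝ) (hθ : 0 < θ) (hH : H ∈ Set.Ioo (0:ℝ) 1) :
    Filter.Tendsto (fun t => VarH θ σ H t) Filter.atTop
      (nhds (σ^2 * θ ^ (2*H) * H * Real.Gamma (2*H))) := by
  obtain ⟨hH0, hH1⟩ := hH
  have h2H : 0 < 2*H := by linarith
  have hq : (-1:ℝ) < 2*H - 1 := by linarith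
  have hb : (0:ℝ) < 1/θ := by positivity
  have hfe : (fun z : ℝ => 2*H * Real.exp (-z/θ) * z ^ (2*H-1))
      = fun x : ℝ => (2*H) * (x ^ (2*H-1) * Real.exp (-(1/θ) * x ^ (1:ℝ))) := by
    funext x
    rw [Real.rpow_one]
    ring_nf
  have hint : IntegrableOn (fun z : ℝ => 2*H * Real.exp (-z/θ) * z ^ (2*H-1)) (Set.Ioi 0) := by
    rw [hfe]
    exact (integrableOn_rpow_mul_exp_neg_mul_rpow hq one_pos hb).const_mul (2*H)
  have hval : ∫ z in Set.Ioi (0:ℝ), 2*H * Real.exp (-z/θ) * z ^ (2*H-1)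
      = 2*H * (θ ^ (2*H) * Real.Gamma (2*H)) := by
    rw [hfe, integral_const_mul, integral_rpow_mul_exp_neg_mul_rpow one_pos hq hb]
    congr 1
    have : (1/θ : ℝ) ^ (-(2*H-1+1)/1) = θ ^ (2*H) := by
      rw [one_div, Real.inv_rpow hθ.le, ← Real.rpow_neg hθ.le]
      norm_num
    rw [this]
    ring_nf
  -- first summand tendsto
  have hA : Tendsto (fun t => ∫ z in (0:ℝ)..t, 2*H * Real.exp (-z/θ) * z ^ (2*H-1)) atTop
      (nhds (2*H * (θ ^ (2*H) * Real.Gamma (2*H)))) := by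
    rw [← hval]
    exact intervalIntegral_tendsto_integral_Ioi 0 hint tendsto_id
  -- second summand tendsto 0
  have hB : Tendsto (fun t => Real.exp (-2*t/θ) * ∫ z in (0:ℝ)..t,
      2*H * Real.exp (z/θ) * z ^ (2*H-1)) atTop (nhds 0) := by
    have hmaj : Tendsto (fun t : ℝ => t ^ (2*H) * Real.exp (-(1/θ) * t)) atTop (nhds 0) :=
      tendsto_rpow_mul_exp_neg_mul_atTop_nhds_zero _ _ hb
    refine squeeze_zero' ?_ ?_ hmaj
    · filter_upwards [eventually_ge_atTop (0:ℝ)] with t ht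
      refine mul_nonneg (Real.exp_pos _).le ?_
      refine intervalIntegral.integral_nonneg ht (fun x hx => ?_)
      have : (0:ℝ) ≤ x ^ (2*H-1) := Real.rpow_nonneg hx.1 _
      positivity
    · filter_upwards [eventually_ge_atTop (0:ℝ)] with t ht
      have hii : IntervalIntegrable (fun z : ℝ => 2*H * Real.exp (z/θ) * z ^ (2*H-1))
          volume 0 t := by
        exact (intervalIntegral.intervalIntegrable_rpow' hq).continuousOn_mul
          ((Continuous.continuousOn (by fun_prop) : ContinuousOn
            (fun z : ℝ => 2*H * Real.exp (z/θ)) (Set.uIcc 0 t)))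
      have hii2 : IntervalIntegrable (fun z : ℝ => 2*H * Real.exp (t/θ) * z ^ (2*H-1))
          volume 0 t :=
        (intervalIntegral.intervalIntegrable_rpow' hq).const_mul _
      have hle : (∫ z in (0:ℝ)..t, 2*H * Real.exp (z/θ) * z ^ (2*H-1))
          ≤ ∫ z in (0:ℝ)..t, 2*H * Real.exp (t/θ) * z ^ (2*H-1) := by
        refine intervalIntegral.integral_mono_on ht hii hii2 (fun x hx => ?_)
        have hx0 : (0:ℝ) ≤ x ^ (2*H-1) := Real.rpow_nonneg hx.1 _
        have hxt : Real.exp (x/θ) ≤ Real.exp (t/θ) := by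
          apply Real.exp_le_exp.2
          gcongr
          exact hx.2
        exact mul_le_mul_of_nonneg_right
          (mul_le_mul_of_nonneg_left hxt (by linarith)) hx0
      have hcalc : (∫ z in (0:ℝ)..t, 2*H * Real.exp (t/θ) * z ^ (2*H-1))
          = Real.exp (t/θ) * t ^ (2*H) := by
        rw [intervalIntegral.integral_const_mul, integral_rpow (Or.inl hq)]
        rw [Real.zero_rpow (by linarith : 2*H-1+1 ≠ 0)]
        field_simp
        ring_nf
      calc Real.exp (-2*t/θ) * ∫ z in (0:ℝ)..t, 2*H * Real.exp (z/θ) * z ^ (2*H-1)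
          ≤ Real.exp (-2*t/θ) * (Real.exp (t/θ) * t ^ (2*H)) := by
            rw [← hcalc]; exact mul_le_mul_of_nonneg_left hle (Real.exp_pos _).le
        _ = t ^ (2*H) * Real.exp (-(1/θ) * t) := by
            have h1 : Real.exp (-2*t/θ) * Real.exp (t/θ) = Real.exp (-(1/θ) * t) := by
              rw [← Real.exp_add]
              congr 1
              field_simp
              ring
            rw [← mul_assoc, h1]
            ring
  have hfin := (hA.add hB).const_mul (σ^2/2)
  simp only [add_zero] at hfin
  have hlim : σ^2 * θ ^ (2*H) * H * Real.Gamma (2*H)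
      = σ^2/2 * (2*H * (θ ^ (2*H) * Real.Gamma (2*H))) := by ring
  rw [hlim]
  simp only [VarH]
  exact hfin
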